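/- Consider a 2-layer linear MPNN with residual connections, H^(1) = H + A H W^(0), H^(2) = H^(1) + A H^(1) W^(1), followed by mean pooling and a linear map: Y_2 = Θ̃ · (H^(2))ᵀ𝟙/n. If the induced polynomial-filter coefficient Θ_0 = Θ̃(I) vanishes (i.e., the zeroth-order term of Y_2 as a polynomial in A vanishes for all inputs H), then Θ̃ = 0 and hence Y_2 ≡ 0. That is, the only degree-2 polynomial filter with vanishing zeroth-order term learnable by a 2-layer linear MPNN with mean pooling is the trivial one. -/

import Mathlib

open Matrix

/-- A 2-layer linear MPNN `H⁽¹⁾ = H + AHW⁽⁰⁾`, `H⁽²⁾ = H⁽¹⁾ + AH⁽¹⁾W⁽¹⁾` with mean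
pooling `Y₂ = Θ̃ (H⁽²⁾)ᵀ𝟙/n`: if the zeroth-order polynomial-filter coefficient
vanishes (i.e. `Θ̃ Mean(H) = 0` for all inputs `H`), then `Θ̃ = 0` and `Y₂ ≡ 0`. -/
theorem linear_mpnn_mean_pooling_zero_order_trivial
    (n d : ℕ) (hn : 0 < n)
    (A : Matrix (Fin n) (Fin n) ℝ)
    (W0 W1 Θ : Matrix (Fin d) (Fin d) ℝ)
    (hzero : ∀ H : Matrix (Fin n) (Fin d) ℝ,
      Θ.mulVec (fun p => (∑ i, H i p) / n) = 0) :
    Θ = 0 ∧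
    ∀ H : Matrix (Fin n) (Fin d) ℝ,
      Θ.mulVec
        (fun p => (∑ i, ((H + A * H * W0) + A * (H + A * H * W0) * W1) i p) / n)
        = 0 := by
  have hΘ : Θ = 0 := by
    ext r q
    have h := hzero (fun _ p => if p = q then 1 else 0)
    have h2 := congrFun h r
    have hn' : (n : ℝ) ≠ 0 := Nat.cast_ne_zero.mpr hn.ne'
    simp only [mulVec, dotProduct, Pi.zero_apply, Finset.sum_ite_eq',
      Finset.sum_const, Finset.card_univ, Fintype.card_fin, nsmul_eq_mul,
      mul_one, mul_zero, mul_div_assoc] at h2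
    rw [Finset.sum_congr rfl (fun p _ => show
        Θ r p * ((n:ℝ) * ((if p = q then 1 else 0) / n)) = if p = q then Θ r p else 0 by
      split <;> field_simp <;> simp)] at h2
    simpa using h2
  refine ⟨hΘ, fun H => ?_⟩
  simp [hΘ]
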